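/- Let C be a finite set of MaxW constraints, each c ∈ C given by an interval I_c ⊆ ℕ (a finite set of consecutive shifts) and a slack s_c ≥ 0 (the minimum required number of rest shifts in I_c). Suppose the intervals {I_c} are refined by a finite partition Q of their union into subintervals, such that each I_c is a disjoint union of subintervals from Q. Let d : Q → ℕ assign rest amounts with d q ≤ |q| for each q ∈ Q, and suppose for every c ∈ C, the sum of d q over subintervals q ⊆ I_c is at least s_c. Define the capped assignment d' q = min (d q) (cap q), where cap q is the maximum of s_c over all constraints c with q ⊆ I_c (and cap q = 0 if no constraint contains q). Then for every c ∈ C, the sum of d' q over subintervals q ⊆ I_c is still at least s_c. -/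
import Mathlib


/-- Capping per-subinterval rest amounts at the maximum slack of the
constraints containing the subinterval preserves feasibility of the
decomposed MaxW constraints (C5), justifying domain reduction (C6). -/
theorem cap_preserves_feasibility {ι : Type*} (C : Finset ι)
    (I : ι → Finset ℕ) (s : ι → ℕ) (Q : Finset (Finset ℕ))
    (hIcc : ∀ c ∈ C, ∃ u v : ℕ, I c = Finset.Icc u v)
    (hQIcc : ∀ q ∈ Q, ∃ u v : ℕ, q = Finset.Icc u v)
    (hdisj : ∀ q ∈ Q, ∀ q' ∈ Q, q ≠ q' → Disjoint q q')
    (hpart : ∀ c ∈ C, (Q.filter (fun q => q ⊆ I c)).biUnion id = I c)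
    (d : Finset ℕ → ℕ)
    (hd : ∀ q ∈ Q, d q ≤ q.card)
    (hfeas : ∀ c ∈ C, s c ≤ ∑ q ∈ Q.filter (fun q => q ⊆ I c), d q) :
    ∀ c ∈ C, s c ≤ ∑ q ∈ Q.filter (fun q => q ⊆ I c),
      min (d q) ((C.filter (fun c' => q ⊆ I c')).sup s) := by
  intro c hc
  by_cases h : ∀ q ∈ Q.filter (fun q => q ⊆ I c),
      d q ≤ (C.filter (fun c' => q ⊆ I c')).sup s
  · calc s c ≤ ∑ q ∈ Q.filter (fun q => q ⊆ I c), d q := hfeas c hc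
      _ = ∑ q ∈ Q.filter (fun q => q ⊆ I c),
            min (d q) ((C.filter (fun c' => q ⊆ I c')).sup s) := by
        apply Finset.sum_congr rfl
        intro q hq
        exact (min_eq_left (h q hq)).symm
  · push_neg at h
    obtain ⟨q, hq, hgt⟩ := h
    have hqI : q ⊆ I c := (Finset.mem_filter.mp hq).2
    have hsle : s c ≤ (C.filter (fun c' => q ⊆ I c')).sup s :=
      Finset.le_sup (Finset.mem_filter.mpr ⟨hc, hqI⟩)
    calc s c ≤ (C.filter (fun c' => q ⊆ I c')).sup s := hsle
      _ = min (d q) ((C.filter (fun c' => q ⊆ I c')).sup s) :=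
        (min_eq_right hgt.le).symm
      _ ≤ _ := Finset.single_le_sum (f := fun q => min (d q) ((C.filter (fun c' => q ⊆ I c')).sup s)) (fun _ _ => Nat.zero_le _) hq
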